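/- arXiv:2111.06650 — 8 statements merged into one kernel-verified Lean document; each statement's English description precedes it below -/
import Mathlib

section
/- Let n ≥ 1 and let X_1, …, X_n be independent {0,1}-valued random variables on a probability space with Pr[X_i = 1] = p_i, where p_i ∈ [0, 1/2] for every i ∈ {1,…,n}. Let p = ∑_{i=1}^n p_i. Then Pr[∑_{i=1}^n X_i = 1] ≥ min(4^{−p}, p/4). -/
open MeasureTheory ProbabilityTheory

open Finset in
lemma four_rpow_neg_le {x : ℝ} (hx : x ∈ Set.Icc (0:ℝ) (1/2)) : (4:ℝ) ^ (-x) ≤ 1 - x := by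
  obtain ⟨h0, h1⟩ := hx
  have h4 : (0:ℝ) < 4 := by norm_num
  have hrw : (4:ℝ) ^ (-x) = Real.exp (Real.log 4 * (-x)) := Real.rpow_def_of_pos h4 _
  have hv : Real.exp (Real.log 4 * (-(1/2))) = 1/2 := by
    have : Real.log 4 = 2 * Real.log 2 := by
      rw [show (4:ℝ) = 2^(2:ℕ) by norm_num, Real.log_pow]; ring
    rw [this, show 2 * Real.log 2 * (-(1/2)) = -Real.log 2 by ring, Real.exp_neg,
      Real.exp_log (by norm_num)]
    norm_num
  have hconv := convexOn_exp.2 (Set.mem_univ (Real.log 4 * 0))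
    (Set.mem_univ (Real.log 4 * (-(1/2)))) (by linarith : (0:ℝ) ≤ 1 - 2*x)
    (by linarith : (0:ℝ) ≤ 2*x) (by ring : (1 - 2*x) + 2*x = 1)
  simp only [smul_eq_mul] at hconv
  have heq : (1 - 2*x) * (Real.log 4 * 0) + 2*x * (Real.log 4 * (-(1/2)))
      = Real.log 4 * (-x) := by ring
  rw [heq, hv] at hconv
  rw [hrw]
  calc Real.exp (Real.log 4 * (-x)) ≤ (1 - 2*x) * Real.exp (Real.log 4 * 0) + 2*x * (1/2) :=
        hconv
    _ = 1 - x := by simp [Real.exp_zero]; ring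

open Finset in
lemma real_core_contention (n : ℕ) (p : Fin n → ℝ)
    (hpI : ∀ i, p i ∈ Set.Icc (0 : ℝ) (1 / 2)) :
    min ((4 : ℝ) ^ (-(∑ i, p i))) ((∑ i, p i) / 4)
      ≤ ∑ i, p i * ∏ j ∈ univ.erase i, (1 - p j) := by
  set P : ℝ := ∑ i, p i with hP
  have hP0 : 0 ≤ P := Finset.sum_nonneg fun i _ => (hpI i).1
  have hnn : ∀ j : Fin n, (0:ℝ) ≤ 1 - p j := fun j => by have := (hpI j).2; linarith
  have hle1 : ∀ j : Fin n, (1:ℝ) - p j ≤ 1 := fun j => by have := (hpI j).1; linarith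
  have hstep1 : ∀ i : Fin n, ∏ j, (1 - p j) ≤ ∏ j ∈ univ.erase i, (1 - p j) := by
    intro i
    rw [← Finset.mul_prod_erase univ _ (mem_univ i)]
    exact mul_le_of_le_one_left (Finset.prod_nonneg fun j _ => hnn j) (hle1 i)
  have hprodnn : (0:ℝ) ≤ ∏ j, (1 - p j) := Finset.prod_nonneg fun j _ => hnn j
  have hstep2 : P * ∏ j, (1 - p j) ≤ ∑ i, p i * ∏ j ∈ univ.erase i, (1 - p j) := by
    rw [hP, Finset.sum_mul]
    exact Finset.sum_le_sum fun i _ =>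
      mul_le_mul_of_nonneg_left (hstep1 i) (hpI i).1
  have hstep3 : (4:ℝ) ^ (-P) ≤ ∏ j, (1 - p j) := by
    have : (4:ℝ) ^ (-P) = ∏ j, (4:ℝ) ^ (-(p j)) := by
      rw [show (4:ℝ)^(-P) = Real.exp (Real.log 4 * (-P)) from
        Real.rpow_def_of_pos (by norm_num) _]
      rw [show Real.log 4 * (-P) = ∑ j, Real.log 4 * (-(p j)) by
        rw [hP, ← Finset.sum_neg_distrib, Finset.mul_sum]]
      rw [Real.exp_sum]
      exact Finset.prod_congr rfl fun j _ => (Real.rpow_def_of_pos (by norm_num) _).symm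
    rw [this]
    exact Finset.prod_le_prod (fun j _ => Real.rpow_nonneg (by norm_num) _)
      (fun j _ => four_rpow_neg_le (hpI j))
  have hmain : P * (4:ℝ) ^ (-P) ≤ ∑ i, p i * ∏ j ∈ univ.erase i, (1 - p j) :=
    le_trans (mul_le_mul_of_nonneg_left hstep3 hP0) hstep2
  refine le_trans ?_ hmain
  rcases le_total P 1 with h | h
  · refine le_trans (min_le_right _ _) ?_
    have hmono : (4:ℝ)^(-(1:ℝ)) ≤ (4:ℝ)^(-P) :=
      Real.rpow_le_rpow_of_exponent_le (by norm_num) (by linarith)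
    have h4 : (4:ℝ)^(-(1:ℝ)) = 1/4 := by
      rw [Real.rpow_neg_one]; norm_num
    rw [h4] at hmono
    calc P / 4 = P * (1/4) := by ring
      _ ≤ P * (4:ℝ)^(-P) := mul_le_mul_of_nonneg_left hmono hP0
  · refine le_trans (min_le_left _ _) ?_
    have h0 : (0:ℝ) ≤ (4:ℝ)^(-P) := Real.rpow_nonneg (by norm_num) _
    nlinarith

/-- For independent {0,1}-valued random variables `X i` with
`Pr[X i = 1] = p i ∈ [0, 1/2]`, and `p = ∑ i, p i`, we have
`Pr[∑ i, X i = 1] ≥ min (4 ^ (-p)) (p / 4)`. -/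
theorem contention_success_lower_bound
    {Ω : Type*} [MeasurableSpace Ω] (μ : Measure Ω) [IsProbabilityMeasure μ]
    (n : ℕ) (hn : 1 ≤ n) (X : Fin n → Ω → ℕ) (p : Fin n → ℝ)
    (hmeas : ∀ i, Measurable (X i))
    (hind : iIndepFun X μ)
    (h01 : ∀ i ω, X i ω = 0 ∨ X i ω = 1)
    (hp : ∀ i, μ {ω | X i ω = 1} = ENNReal.ofReal (p i))
    (hpI : ∀ i, p i ∈ Set.Icc (0 : ℝ) (1 / 2)) :
    ENNReal.ofReal (min ((4 : ℝ) ^ (-(∑ i, p i))) ((∑ i, p i) / 4)) ≤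
      μ {ω | (∑ i, X i ω) = 1} := by
  classical
  -- probabilities of elementary events
  have h1 : ∀ j, μ (X j ⁻¹' {1}) = ENNReal.ofReal (p j) := by
    intro j
    have : X j ⁻¹' {1} = {ω | X j ω = 1} := rfl
    rw [this, hp j]
  have h0 : ∀ j, μ (X j ⁻¹' {0}) = ENNReal.ofReal (1 - p j) := by
    intro j
    have hc : X j ⁻¹' {0} = (X j ⁻¹' {1})ᶜ := by
      ext ω
      simp only [Set.mem_preimage, Set.mem_singleton_iff, Set.mem_compl_iff]
      rcases h01 j ω with h | h <;> simp [h]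
    rw [hc, measure_compl ((hmeas j) (measurableSet_singleton 1)) (measure_ne_top μ _),
      measure_univ, h1 j, ENNReal.ofReal_sub _ (hpI j).1, ENNReal.ofReal_one]
  -- the events A i
  set A : Fin n → Set Ω := fun i => ⋂ j, X j ⁻¹' {if j = i then 1 else 0} with hA
  have hAmeas : ∀ i, MeasurableSet (A i) :=
    fun i => MeasurableSet.iInter fun j => (hmeas j) (measurableSet_singleton _)
  have hAval : ∀ i ω, ω ∈ A i ↔ ∀ j, X j ω = if j = i then 1 else 0 := by
    intro i ω
    simp [hA, Set.mem_iInter]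
  have hμA : ∀ i, μ (A i) =
      ENNReal.ofReal (p i * ∏ j ∈ Finset.univ.erase i, (1 - p j)) := by
    intro i
    have := hind.meas_iInter (s := fun j => X j ⁻¹' {if j = i then 1 else 0})
      (fun j => ⟨{if j = i then 1 else 0}, measurableSet_singleton _, rfl⟩)
    rw [hA, this]
    have heach : ∀ j, μ (X j ⁻¹' {if j = i then 1 else 0})
        = ENNReal.ofReal (if j = i then p i else 1 - p j) := by
      intro j
      by_cases hji : j = i <;> simp [hji, h1, h0]
    rw [Finset.prod_congr rfl fun j _ => heach j,
      ← ENNReal.ofReal_prod_of_nonneg (fun j _ => by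
        by_cases hji : j = i
        · simpa [hji] using (hpI i).1
        · have := (hpI j).2; simp only [hji, if_false]; linarith)]
    congr 1
    have : (fun j => if j = i then p i else 1 - p j)
        = Function.update (fun j => 1 - p j) i (p i) := by
      funext j
      rw [Function.update_apply]
    rw [show ∏ j, (if j = i then p i else 1 - p j)
        = ∏ j, Function.update (fun j => 1 - p j) i (p i) j from
        Finset.prod_congr rfl fun j _ => by rw [Function.update_apply]]
    rw [Finset.prod_update_of_mem (Finset.mem_univ i), Finset.sdiff_singleton_eq_erase]
  -- disjointness
  have hdisj : Pairwise (Function.onFun Disjoint A) := by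
    intro i k hik
    rw [Function.onFun, Set.disjoint_left]
    intro ω hωi hωk
    have hi := (hAval i ω).1 hωi i
    have hk := (hAval k ω).1 hωk i
    simp at hi
    simp [hik] at hk
    omega
  -- union is inside the target event
  have hsub : (⋃ i, A i) ⊆ {ω | (∑ i, X i ω) = 1} := by
    intro ω hω
    obtain ⟨i, hi⟩ := Set.mem_iUnion.1 hω
    have := (hAval i ω).1 hi
    simp only [Set.mem_setOf_eq]
    rw [Finset.sum_congr rfl fun j _ => this j]
    simp
  calc ENNReal.ofReal (min ((4 : ℝ) ^ (-(∑ i, p i))) ((∑ i, p i) / 4))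
      ≤ ENNReal.ofReal (∑ i, p i * ∏ j ∈ Finset.univ.erase i, (1 - p j)) :=
        ENNReal.ofReal_le_ofReal (real_core_contention n p hpI)
    _ = ∑ i, ENNReal.ofReal (p i * ∏ j ∈ Finset.univ.erase i, (1 - p j)) := by
        rw [ENNReal.ofReal_sum_of_nonneg]
        intro i _
        have hnn : (0:ℝ) ≤ ∏ j ∈ Finset.univ.erase i, (1 - p j) :=
          Finset.prod_nonneg fun j _ => by have := (hpI j).2; linarith
        exact mul_nonneg (hpI i).1 hnn
    _ = ∑ i, μ (A i) := by
        exact (Finset.sum_congr rfl fun i _ => (hμA i).symm)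
    _ = μ (⋃ i, A i) := by
        rw [measure_iUnion hdisj hAmeas, tsum_fintype]
    _ ≤ μ {ω | (∑ i, X i ω) = 1} := measure_mono hsub
end

section
/- Let n ≥ 1 and let X_1, …, X_n be independent {0,1}-valued random variables on a probability space with Pr[X_i = 1] = p_i, where p_i ∈ [0, 1] for every i ∈ {1,…,n}. Let p = ∑_{i=1}^n p_i. Then Pr[∑_{i=1}^n X_i = 1] ≤ p · e^{−p+1}. -/
open MeasureTheory ProbabilityTheory

lemma contention_real_bound (n : ℕ) (p : Fin n → ℝ)
    (hpI : ∀ i, p i ∈ Set.Icc (0 : ℝ) 1) :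
    (∑ i, ∏ j, (if j = i then p j else 1 - p j)) ≤
      (∑ i, p i) * Real.exp (-(∑ i, p i) + 1) := by
  have h0 : ∀ i, 0 ≤ p i := fun i => (hpI i).1
  have h1 : ∀ i, p i ≤ 1 := fun i => (hpI i).2
  calc (∑ i, ∏ j, (if j = i then p j else 1 - p j))
      ≤ ∑ i, p i * Real.exp (-(∑ j, p j) + 1) := by
        apply Finset.sum_le_sum
        intro i _
        rw [← Finset.mul_prod_erase Finset.univ _ (Finset.mem_univ i)]
        simp only [if_pos rfl]
        apply mul_le_mul_of_nonneg_left _ (h0 i)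
        have step1 : (∏ j ∈ Finset.univ.erase i, (if j = i then p j else 1 - p j))
            ≤ ∏ j ∈ Finset.univ.erase i, Real.exp (-(p j)) := by
          apply Finset.prod_le_prod
          · intro j hj
            rw [if_neg (Finset.ne_of_mem_erase hj)]
            linarith [h1 j]
          · intro j hj
            rw [if_neg (Finset.ne_of_mem_erase hj)]
            linarith [Real.add_one_le_exp (-(p j))]
        refine step1.trans ?_
        rw [← Real.exp_sum]
        apply Real.exp_le_exp.mpr
        have : ∑ j ∈ Finset.univ.erase i, -(p j)
            = -(∑ j, p j) + p i := by
          rw [← Finset.sum_neg_distrib, ← Finset.add_sum_erase Finset.univ (fun j => -(p j)) (Finset.mem_univ i)]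
          ring
        rw [this]
        linarith [h1 i]
    _ = (∑ i, p i) * Real.exp (-(∑ i, p i) + 1) := by
        rw [← Finset.sum_mul]

/-- For independent {0,1}-valued random variables `X i` with
`Pr[X i = 1] = p i ∈ [0, 1]`, and `p = ∑ i, p i`, we have
`Pr[∑ i, X i = 1] ≤ p * exp (-p + 1)`. -/
theorem contention_success_upper_bound
    {Ω : Type*} [MeasurableSpace Ω] (μ : Measure Ω) [IsProbabilityMeasure μ]
    (n : ℕ) (hn : 1 ≤ n) (X : Fin n → Ω → ℕ) (p : Fin n → ℝ)
    (hmeas : ∀ i, Measurable (X i))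
    (hind : iIndepFun X μ)
    (h01 : ∀ i ω, X i ω = 0 ∨ X i ω = 1)
    (hp : ∀ i, μ {ω | X i ω = 1} = ENNReal.ofReal (p i))
    (hpI : ∀ i, p i ∈ Set.Icc (0 : ℝ) 1) :
    μ {ω | (∑ i, X i ω) = 1} ≤
      ENNReal.ofReal ((∑ i, p i) * Real.exp (-(∑ i, p i) + 1)) := by
  have h0 : ∀ i, 0 ≤ p i := fun i => (hpI i).1
  have h1 : ∀ i, p i ≤ 1 := fun i => (hpI i).2
  -- set A i = {ω | ∀ j, X j ω = if j = i then 1 else 0}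
  set A : Fin n → Set Ω := fun i => ⋂ j, {ω | X j ω = if j = i then 1 else 0} with hA
  have hset : {ω | (∑ i, X i ω) = 1} = ⋃ i, A i := by
    ext ω
    simp only [Set.mem_setOf_eq, Set.mem_iUnion, hA, Set.mem_iInter]
    constructor
    · intro hsum
      -- there exists i with X i ω = 1
      have hex : ∃ i, X i ω = 1 := by
        by_contra h
        push_neg at h
        have : ∀ i ∈ Finset.univ, X i ω = 0 := by
          intro i _
          rcases h01 i ω with h' | h'
          · exact h'
          · exact absurd h' (h i)
        rw [Finset.sum_eq_zero this] at hsum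
        exact one_ne_zero hsum.symm
      obtain ⟨i, hi⟩ := hex
      refine ⟨i, fun j => ?_⟩
      by_cases hji : j = i
      · subst hji; simp [hi]
      · rw [if_neg hji]
        by_contra hj0
        have hj1 : X j ω = 1 := (h01 j ω).resolve_left hj0
        have : 2 ≤ ∑ k, X k ω := by
          have : ({i, j} : Finset (Fin n)) ⊆ Finset.univ := Finset.subset_univ _
          calc 2 = ∑ k ∈ ({i, j} : Finset (Fin n)), X k ω := by
                rw [Finset.sum_pair (Ne.symm hji)]; omega
            _ ≤ ∑ k, X k ω := Finset.sum_le_sum_of_subset this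
        omega
    · rintro ⟨i, hi⟩
      have : ∀ j, X j ω = if j = i then 1 else 0 := hi
      calc ∑ j, X j ω = ∑ j, if j = i then 1 else 0 := by
            exact Finset.sum_congr rfl (fun j _ => this j)
        _ = 1 := by simp
  rw [hset]
  have hAmeas : ∀ i, MeasurableSet (A i) := by
    intro i
    exact MeasurableSet.iInter fun j => (hmeas j) (measurableSet_singleton _)
  have hdisj : Pairwise (Function.onFun Disjoint A) := by
    intro i j hij
    simp only [Function.onFun, Set.disjoint_left]
    intro ω hωi hωj
    simp only [hA, Set.mem_iInter, Set.mem_setOf_eq] at hωi hωj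
    have h1' := hωi i
    have h2' := hωj i
    rw [if_pos rfl] at h1'
    rw [if_neg hij] at h2'
    omega
  rw [measure_iUnion hdisj hAmeas, tsum_fintype]
  -- measure of each A i
  have hAi : ∀ i, μ (A i) = ENNReal.ofReal (∏ j, (if j = i then p j else 1 - p j)) := by
    intro i
    have hmi : ∀ j : Fin n, MeasurableSet[MeasurableSpace.comap (X j) inferInstance]
        {ω | X j ω = if j = i then 1 else 0} :=
      fun j => ⟨{if j = i then 1 else 0}, measurableSet_singleton _, rfl⟩
    have := hind.meas_iInter hmi
    rw [hA, this]
    have hterm : ∀ j, μ {ω | X j ω = if j = i then 1 else 0}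
        = ENNReal.ofReal (if j = i then p j else 1 - p j) := by
      intro j
      by_cases hji : j = i
      · simp only [if_pos hji]; exact hp j
      · simp only [if_neg hji]
        have hcompl : {ω | X j ω = 0} = {ω | X j ω = 1}ᶜ := by
          ext ω
          simp only [Set.mem_setOf_eq, Set.mem_compl_iff]
          rcases h01 j ω with h' | h' <;> simp [h']
        have hms : MeasurableSet {ω | X j ω = 1} := (hmeas j) (measurableSet_singleton _)
        rw [hcompl, prob_compl_eq_one_sub hms, hp j,
          ENNReal.ofReal_sub _ (h0 j)]
        simp
    rw [Finset.prod_congr rfl (fun j _ => hterm j),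
      ← ENNReal.ofReal_prod_of_nonneg]
    intro j _
    by_cases hji : j = i
    · simp [hji, h0 i]
    · simp only [if_neg hji]; linarith [h1 j]
  calc ∑ i, μ (A i) = ENNReal.ofReal (∑ i, ∏ j, (if j = i then p j else 1 - p j)) := by
        rw [ENNReal.ofReal_sum_of_nonneg]
        · exact Finset.sum_congr rfl (fun i _ => hAi i)
        · intro i _
          apply Finset.prod_nonneg
          intro j _
          by_cases hji : j = i
          · simp [hji, h0 i]
          · simp only [if_neg hji]; linarith [h1 j]
    _ ≤ _ := ENNReal.ofReal_le_ofReal (contention_real_bound n p hpI)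
end

section
/- Let n ≥ 1 and let X_1, …, X_n be independent {0,1}-valued random variables on a probability space with Pr[X_i = 1] = p_i, where p_i ∈ [0, 1] for every i ∈ {1,…,n}. Let p = ∑_{i=1}^n p_i. Then Pr[∑_{i=1}^n X_i = 1] ≥ p · ∏_{i=1}^n (1 − p_i). -/
open MeasureTheory ProbabilityTheory

/-- For independent {0,1}-valued random variables `X i` with
`Pr[X i = 1] = p i ∈ [0, 1]`, and `p = ∑ i, p i`, we have
`Pr[∑ i, X i = 1] ≥ p * ∏ i, (1 - p i)`. -/
theorem contention_success_product_lower_bound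
    {Ω : Type*} [MeasurableSpace Ω] (μ : Measure Ω) [IsProbabilityMeasure μ]
    (n : ℕ) (hn : 1 ≤ n) (X : Fin n → Ω → ℕ) (p : Fin n → ℝ)
    (hmeas : ∀ i, Measurable (X i))
    (hind : iIndepFun X μ)
    (h01 : ∀ i ω, X i ω = 0 ∨ X i ω = 1)
    (hp : ∀ i, μ {ω | X i ω = 1} = ENNReal.ofReal (p i))
    (hpI : ∀ i, p i ∈ Set.Icc (0 : ℝ) 1) :
    ENNReal.ofReal ((∑ i, p i) * ∏ i, (1 - p i)) ≤ μ {ω | (∑ i, X i ω) = 1} := by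
  classical
  -- the event A i : X i = 1 and all others 0
  set A : Fin n → Set Ω := fun i => ⋂ j, {ω | X j ω = if j = i then 1 else 0} with hA
  -- measure of {X j = 0}
  have h0 : ∀ j, μ {ω | X j ω = 0} = ENNReal.ofReal (1 - p j) := by
    intro j
    have hc : {ω | X j ω = 0} = {ω | X j ω = 1}ᶜ := by
      ext ω; simp only [Set.mem_setOf_eq, Set.mem_compl_iff]
      rcases h01 j ω with h | h <;> simp [h]
    have hms : MeasurableSet {ω | X j ω = 1} := (hmeas j) (measurableSet_singleton 1)
    rw [hc, measure_compl hms (measure_ne_top μ _), hp j, measure_univ,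
      ENNReal.ofReal_sub _ (hpI j).1]
    simp
  have hmA : ∀ i, μ (A i) = ENNReal.ofReal (p i) * ∏ j ∈ Finset.univ.erase i,
      ENNReal.ofReal (1 - p j) := by
    intro i
    have := hind.meas_iInter (s := fun j => {ω | X j ω = if j = i then 1 else 0})
      (fun j => ⟨{if j = i then 1 else 0}, measurableSet_singleton _, rfl⟩)
    rw [hA]
    rw [this]
    rw [← Finset.mul_prod_erase Finset.univ _ (Finset.mem_univ i)]
    congr 1
    · simp [hp i]
    · refine Finset.prod_congr rfl fun j hj => ?_
      have : j ≠ i := Finset.ne_of_mem_erase hj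
      simp [this, h0 j]
  -- A i are pairwise disjoint
  have hdisj : Pairwise (Function.onFun Disjoint A) := by
    intro i j hij
    refine Set.disjoint_left.2 fun ω hi hj => ?_
    have h1 : X i ω = 1 := by have := Set.mem_iInter.1 hi i; simpa using this
    have h2 : X i ω = 0 := by
      have := Set.mem_iInter.1 hj i; simpa [hij] using this
    omega
  -- union of A i is a subset of the target event
  have hsub : (⋃ i, A i) ⊆ {ω | (∑ i, X i ω) = 1} := by
    rintro ω ⟨_, ⟨i, rfl⟩, hω⟩
    have hval : ∀ j, X j ω = if j = i then 1 else 0 := fun j => Set.mem_iInter.1 hω j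
    simp only [Set.mem_setOf_eq]
    calc (∑ j, X j ω) = ∑ j, if j = i then 1 else 0 := by
          exact Finset.sum_congr rfl fun j _ => hval j
      _ = 1 := by simp
  have hmAs : ∀ i, MeasurableSet (A i) := by
    intro i
    exact MeasurableSet.iInter fun j => (hmeas j) (measurableSet_singleton _)
  have key : μ (⋃ i, A i) = ∑ i, μ (A i) := (measure_iUnion hdisj hmAs).trans (tsum_fintype _)
  refine le_trans ?_ (le_trans (le_of_eq key.symm) (measure_mono hsub))
  -- now the numeric estimate
  have hprod_le : ∀ i : Fin n, (∏ j, ENNReal.ofReal (1 - p j)) ≤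
      ∏ j ∈ Finset.univ.erase i, ENNReal.ofReal (1 - p j) := by
    intro i
    rw [← Finset.mul_prod_erase Finset.univ _ (Finset.mem_univ i)]
    refine mul_le_of_le_one_left zero_le ?_
    have h1 : ENNReal.ofReal (1 - p i) ≤ 1 := ENNReal.ofReal_le_one.2 (by linarith [(hpI i).1])
    simpa using h1
  have hexp : ENNReal.ofReal ((∑ i, p i) * ∏ i, (1 - p i)) =
      ∑ i, ENNReal.ofReal (p i) * ∏ j, ENNReal.ofReal (1 - p j) := by
    rw [ENNReal.ofReal_mul (Finset.sum_nonneg fun i _ => (hpI i).1),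
      ENNReal.ofReal_sum_of_nonneg (fun i _ => (hpI i).1),
      ENNReal.ofReal_prod_of_nonneg (fun i _ => by linarith [(hpI i).2]),
      Finset.sum_mul]
  rw [hexp]
  refine Finset.sum_le_sum fun i _ => ?_
  rw [hmA i]
  exact mul_le_mul_right (hprod_le i) _
end

section
/- Let n ≥ 1 and let X_1, …, X_n be independent {0,1}-valued random variables on a probability space with Pr[X_i = 1] = p_i, where p_i ∈ [0, 1] for every i ∈ {1,…,n}. Let p = ∑_{i=1}^n p_i. If λ ≥ 1 is a real number and p ≥ 2·ln(λ) + 2, then Pr[∑_{i=1}^n X_i = 1] ≤ 1/λ. -/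
open MeasureTheory ProbabilityTheory

private lemma le_exp_half (t : ℝ) : t ≤ Real.exp (t / 2) := by
  rcases le_or_gt t 0 with h | h
  · exact h.trans (Real.exp_pos _).le
  · have h1 := Real.add_one_le_exp (t / 4)
    have h2 : Real.exp (t / 2) = Real.exp (t / 4) * Real.exp (t / 4) := by
      rw [← Real.exp_add]; ring_nf
    nlinarith [Real.exp_pos (t / 4), sq_nonneg (1 - t / 4)]

private lemma real_bound (n : ℕ) (p : Fin n → ℝ)
    (hpI : ∀ i, p i ∈ Set.Icc (0 : ℝ) 1)
    (lam : ℝ) (hlam : 1 ≤ lam)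
    (hbig : 2 * Real.log lam + 2 ≤ ∑ i, p i) :
    ∑ i, p i * ∏ j ∈ Finset.univ.erase i, (1 - p j) ≤ 1 / lam := by
  set P := ∑ i, p i with hP
  have hP2 : (2 : ℝ) ≤ P := by
    have := Real.log_nonneg hlam; linarith
  have step1 : ∀ i : Fin n, p i * ∏ j ∈ Finset.univ.erase i, (1 - p j)
      ≤ p i * Real.exp (1 - P) := by
    intro i
    have hprod : ∏ j ∈ Finset.univ.erase i, (1 - p j)
        ≤ ∏ j ∈ Finset.univ.erase i, Real.exp (-(p j)) := by
      apply Finset.prod_le_prod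
      · intro j _; have := (hpI j).2; linarith
      · intro j _
        have := Real.add_one_le_exp (-(p j)); linarith
    have hexp : ∏ j ∈ Finset.univ.erase i, Real.exp (-(p j))
        = Real.exp (-(∑ j ∈ Finset.univ.erase i, p j)) := by
      rw [← Real.exp_sum, Finset.sum_neg_distrib]
    have hsum : ∑ j ∈ Finset.univ.erase i, p j = P - p i := by
      have := Finset.add_sum_erase Finset.univ p (Finset.mem_univ i)
      rw [hP]; linarith
    have hmono : Real.exp (-(P - p i)) ≤ Real.exp (1 - P) := by
      apply Real.exp_le_exp.mpr
      have := (hpI i).2; linarith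
    have hnn : 0 ≤ p i := (hpI i).1
    calc p i * ∏ j ∈ Finset.univ.erase i, (1 - p j)
        ≤ p i * Real.exp (-(P - p i)) := by
          rw [← hsum, ← hexp] at *
          exact mul_le_mul_of_nonneg_left hprod hnn
      _ ≤ p i * Real.exp (1 - P) := mul_le_mul_of_nonneg_left hmono hnn
  have step2 : ∑ i, p i * ∏ j ∈ Finset.univ.erase i, (1 - p j)
      ≤ P * Real.exp (1 - P) := by
    calc ∑ i, p i * ∏ j ∈ Finset.univ.erase i, (1 - p j)
        ≤ ∑ i, p i * Real.exp (1 - P) := Finset.sum_le_sum fun i _ => step1 i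
      _ = P * Real.exp (1 - P) := by rw [← Finset.sum_mul]
  have step3 : P * Real.exp (1 - P) ≤ Real.exp (1 - P / 2) := by
    have h1 : P ≤ Real.exp (P / 2) := le_exp_half P
    have h2 : (0:ℝ) < Real.exp (1 - P) := Real.exp_pos _
    calc P * Real.exp (1 - P) ≤ Real.exp (P / 2) * Real.exp (1 - P) :=
          mul_le_mul_of_nonneg_right h1 h2.le
      _ = Real.exp (1 - P / 2) := by rw [← Real.exp_add]; ring_nf
  have step4 : Real.exp (1 - P / 2) ≤ 1 / lam := by
    have hlam0 : (0:ℝ) < lam := lt_of_lt_of_le one_pos hlam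
    have : Real.exp (1 - P / 2) ≤ Real.exp (- Real.log lam) := by
      apply Real.exp_le_exp.mpr; linarith
    rwa [Real.exp_neg, Real.exp_log hlam0, ← one_div] at this
  linarith

/-- For independent {0,1}-valued random variables `X i` with
`Pr[X i = 1] = p i ∈ [0, 1]` and `p = ∑ i, p i`, if `lam ≥ 1` and
`p ≥ 2 * ln lam + 2`, then `Pr[∑ i, X i = 1] ≤ 1 / lam`. -/
theorem high_contention_no_success
    {Ω : Type*} [MeasurableSpace Ω] (μ : Measure Ω) [IsProbabilityMeasure μ]
    (n : ℕ) (hn : 1 ≤ n) (X : Fin n → Ω → ℕ) (p : Fin n → ℝ)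
    (hmeas : ∀ i, Measurable (X i))
    (hind : iIndepFun X μ)
    (h01 : ∀ i ω, X i ω = 0 ∨ X i ω = 1)
    (hp : ∀ i, μ {ω | X i ω = 1} = ENNReal.ofReal (p i))
    (hpI : ∀ i, p i ∈ Set.Icc (0 : ℝ) 1)
    (lam : ℝ) (hlam : 1 ≤ lam)
    (hbig : 2 * Real.log lam + 2 ≤ ∑ i, p i) :
    μ {ω | (∑ i, X i ω) = 1} ≤ ENNReal.ofReal (1 / lam) := by
  classical
  -- the sets
  set s : Fin n → Fin n → Set ℕ := fun i j => if j = i then {1} else {0} with hs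
  -- preimage measures
  have hpre1 : ∀ j, μ (X j ⁻¹' {1}) = ENNReal.ofReal (p j) := by
    intro j
    have : X j ⁻¹' {1} = {ω | X j ω = 1} := by ext ω; simp
    rw [this, hp]
  have hpre0 : ∀ j, μ (X j ⁻¹' {0}) = ENNReal.ofReal (1 - p j) := by
    intro j
    have hcompl : X j ⁻¹' ({0} : Set ℕ) = (X j ⁻¹' {1})ᶜ := by
      ext ω
      rcases h01 j ω with h | h <;> simp [h]
    rw [hcompl, measure_compl ((hmeas j) (measurableSet_singleton 1)) (measure_ne_top μ _),
      measure_univ, hpre1, ENNReal.ofReal_sub _ (hpI j).1, ENNReal.ofReal_one]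
  -- independence gives product formula
  have key : ∀ i : Fin n,
      μ (⋂ j ∈ Finset.univ, X j ⁻¹' s i j)
        = ENNReal.ofReal (p i * ∏ j ∈ Finset.univ.erase i, (1 - p j)) := by
    intro i
    have hmeasS : ∀ j, j ∈ (Finset.univ : Finset (Fin n)) → MeasurableSet (s i j) := by
      intro j _
      by_cases h : j = i <;> simp [hs, h]
    have h1 := hind.measure_inter_preimage_eq_mul Finset.univ hmeasS
    rw [h1]
    have hprod : ∏ j, μ (X j ⁻¹' s i j)
        = ENNReal.ofReal (p i) * ∏ j ∈ Finset.univ.erase i, ENNReal.ofReal (1 - p j) := by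
      rw [← Finset.mul_prod_erase Finset.univ _ (Finset.mem_univ i)]
      congr 1
      · simp [hs, hpre1 i]
      · apply Finset.prod_congr rfl
        intro j hj
        have : j ≠ i := (Finset.mem_erase.mp hj).1
        simp [hs, this, hpre0 j]
    rw [hprod, ← ENNReal.ofReal_prod_of_nonneg, ← ENNReal.ofReal_mul (hpI i).1]
    intro j hj
    have := (hpI j).2; linarith
  -- subset
  have hsub : {ω | (∑ i, X i ω) = 1} ⊆ ⋃ i, ⋂ j ∈ Finset.univ, X j ⁻¹' s i j := by
    intro ω hω
    simp only [Set.mem_setOf_eq] at hω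
    have hex : ∃ i, X i ω = 1 := by
      by_contra h
      push_neg at h
      have : ∀ i, X i ω = 0 := fun i => (h01 i ω).resolve_right (h i)
      simp [this] at hω
    obtain ⟨i, hi⟩ := hex
    have hothers : ∀ j, j ≠ i → X j ω = 0 := by
      intro j hj
      have hsplit : ∑ k, X k ω = X i ω + ∑ k ∈ Finset.univ.erase i, X k ω :=
        (Finset.add_sum_erase Finset.univ (fun k => X k ω) (Finset.mem_univ i)).symm
      have hzero : ∑ k ∈ Finset.univ.erase i, X k ω = 0 := by omega
      have := Finset.sum_eq_zero_iff.mp hzero j (by simp [hj])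
      exact this
    apply Set.mem_iUnion.mpr ⟨i, ?_⟩
    simp only [Set.mem_iInter]
    intro j _
    by_cases h : j = i
    · simp [hs, h, hi]
    · simp [hs, h, hothers j h]
  -- union bound
  calc μ {ω | (∑ i, X i ω) = 1}
      ≤ μ (⋃ i, ⋂ j ∈ Finset.univ, X j ⁻¹' s i j) := measure_mono hsub
    _ ≤ ∑ i, μ (⋂ j ∈ Finset.univ, X j ⁻¹' s i j) := measure_iUnion_fintype_le _ _
    _ = ∑ i, ENNReal.ofReal (p i * ∏ j ∈ Finset.univ.erase i, (1 - p j)) := by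
        apply Finset.sum_congr rfl; intro i _; exact key i
    _ = ENNReal.ofReal (∑ i, p i * ∏ j ∈ Finset.univ.erase i, (1 - p j)) := by
        rw [ENNReal.ofReal_sum_of_nonneg]
        intro i _
        apply mul_nonneg (hpI i).1
        apply Finset.prod_nonneg
        intro j _; have := (hpI j).2; linarith
    _ ≤ ENNReal.ofReal (1 / lam) :=
        ENNReal.ofReal_le_ofReal (real_bound n p hpI lam hlam hbig)
end

section
/- Let n ≥ 1 and let X_1, …, X_n be independent {0,1}-valued random variables on a probability space with Pr[X_i = 1] = p_i, where p_i ∈ [0, 1/2] for every i ∈ {1,…,n}. Let p = ∑_{i=1}^n p_i. If 1/4 ≤ p ≤ 2, then Pr[∑_{i=1}^n X_i = 1] ≥ 1/16. -/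
open MeasureTheory ProbabilityTheory

lemma aux_exp_le (x : ℝ) (h0 : 0 ≤ x) (h1 : x ≤ 1/2) :
    Real.exp (-(2 * Real.log 2) * x) ≤ 1 - x := by
  have ha : (0:ℝ) ≤ 1 - 2*x := by linarith
  have hb : (0:ℝ) ≤ 2*x := by linarith
  have h := convexOn_exp.2 (Set.mem_univ (0:ℝ)) (Set.mem_univ (-Real.log 2))
    ha hb (by ring)
  simp only [smul_eq_mul, mul_zero, zero_add, Real.exp_zero] at h
  have h2 : Real.exp (-Real.log 2) = 1/2 := by
    rw [Real.exp_neg, Real.exp_log two_pos]; norm_num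
  rw [h2] at h
  calc Real.exp (-(2 * Real.log 2) * x) = Real.exp (2*x * -Real.log 2) := by ring_nf
    _ ≤ (1 - 2*x) * 1 + 2*x * (1/2) := h
    _ = 1 - x := by ring

lemma aux_exp_le2 (P : ℝ) (h0 : 1/4 ≤ P) (h1 : P ≤ 2) :
    Real.exp (2 * Real.log 2 * P) ≤ 16 * P := by
  set a : ℝ := (2 - P) * 4 / 7 with hadef
  set b : ℝ := (4 * P - 1) / 7 with hbdef
  have ha : 0 ≤ a := by rw [hadef]; linarith
  have hb : 0 ≤ b := by rw [hbdef]; linarith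
  have hab : a + b = 1 := by rw [hadef, hbdef]; ring
  have h := convexOn_exp.2 (Set.mem_univ (Real.log 2 / 2)) (Set.mem_univ (4 * Real.log 2))
    ha hb hab
  simp only [smul_eq_mul] at h
  have he : a * (Real.log 2 / 2) + b * (4 * Real.log 2) = 2 * Real.log 2 * P := by
    rw [hadef, hbdef]; ring
  rw [he] at h
  have hs : Real.exp (Real.log 2 / 2) * Real.exp (Real.log 2 / 2) = 2 := by
    rw [← Real.exp_add, show Real.log 2 / 2 + Real.log 2 / 2 = Real.log 2 by ring,
      Real.exp_log two_pos]
  have hs4 : Real.exp (Real.log 2 / 2) ≤ 4 := by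
    nlinarith [Real.exp_pos (Real.log 2 / 2)]
  have h16 : Real.exp (4 * Real.log 2) = 16 := by
    rw [show (4:ℝ) * Real.log 2 = (4:ℕ) * Real.log 2 by norm_num, Real.exp_nat_mul,
      Real.exp_log two_pos]; norm_num
  rw [h16] at h
  calc Real.exp (2 * Real.log 2 * P) ≤ a * Real.exp (Real.log 2 / 2) + b * 16 := h
    _ ≤ a * 4 + b * 16 := by nlinarith
    _ ≤ 16 * P := by rw [hadef, hbdef]; ring_nf; linarith

lemma real_key (n : ℕ) (p : Fin n → ℝ)
    (hpI : ∀ i, p i ∈ Set.Icc (0 : ℝ) (1 / 2))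
    (hlo : 1 / 4 ≤ ∑ i, p i) (hhi : ∑ i, p i ≤ 2) :
    (1/16 : ℝ) ≤ ∑ i, ∏ j, (if j = i then p j else 1 - p j) := by
  set P := ∑ i, p i with hP
  have hC0 : ∀ j, (0:ℝ) ≤ 1 - p j := fun j => by have := (hpI j).2; linarith
  have hCnn : ∀ (s : Finset (Fin n)), (0:ℝ) ≤ ∏ j ∈ s, (1 - p j) :=
    fun s => Finset.prod_nonneg fun j _ => hC0 j
  have hC : Real.exp (-(2 * Real.log 2) * P) ≤ ∏ j, (1 - p j) := by
    calc Real.exp (-(2 * Real.log 2) * P)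
        = ∏ j, Real.exp (-(2 * Real.log 2) * p j) := by
          rw [← Real.exp_sum, ← Finset.mul_sum]
      _ ≤ ∏ j, (1 - p j) := Finset.prod_le_prod (fun j _ => (Real.exp_pos _).le)
          (fun j _ => aux_exp_le (p j) (hpI j).1 (hpI j).2)
  have step1 : ∀ i : Fin n, p i * ∏ j, (1 - p j) ≤ ∏ j, (if j = i then p j else 1 - p j) := by
    intro i
    have hR : ∏ j, (if j = i then p j else 1 - p j)
        = p i * ∏ j ∈ Finset.univ.erase i, (1 - p j) := by
      rw [← Finset.mul_prod_erase Finset.univ _ (Finset.mem_univ i), if_pos rfl]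
      exact congrArg _ (Finset.prod_congr rfl fun j hj => if_neg (Finset.ne_of_mem_erase hj))
    rw [hR]
    have : ∏ j, (1 - p j) ≤ ∏ j ∈ Finset.univ.erase i, (1 - p j) := by
      rw [← Finset.mul_prod_erase Finset.univ _ (Finset.mem_univ i)]
      have := (hpI i).1
      nlinarith [hCnn (Finset.univ.erase i)]
    exact mul_le_mul_of_nonneg_left this (hpI i).1
  have hsum : P * ∏ j, (1 - p j) ≤ ∑ i, ∏ j, (if j = i then p j else 1 - p j) := by
    rw [hP, Finset.sum_mul]
    exact Finset.sum_le_sum fun i _ => step1 i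
  have hfin : (1/16 : ℝ) ≤ P * Real.exp (-(2 * Real.log 2) * P) := by
    have h2 := aux_exp_le2 P hlo hhi
    have hep := Real.exp_pos (2 * Real.log 2 * P)
    rw [neg_mul, Real.exp_neg, ← div_eq_mul_inv, le_div_iff₀ hep]
    linarith
  calc (1/16:ℝ) ≤ P * Real.exp (-(2 * Real.log 2) * P) := hfin
    _ ≤ P * ∏ j, (1 - p j) := mul_le_mul_of_nonneg_left hC (by linarith)
    _ ≤ _ := hsum

lemma ofReal_prod_aux {α : Type*} (s : Finset α) (f : α → ℝ) (h : ∀ i ∈ s, 0 ≤ f i) :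
    ENNReal.ofReal (∏ i ∈ s, f i) = ∏ i ∈ s, ENNReal.ofReal (f i) := by
  induction s using Finset.cons_induction with
  | empty => simp
  | cons a s ha ih =>
    rw [Finset.prod_cons, Finset.prod_cons,
      ENNReal.ofReal_mul (h a (Finset.mem_cons_self a s)),
      ih fun i hi => h i (Finset.mem_cons_of_mem hi)]

theorem main_meas
    {Ω : Type*} [MeasurableSpace Ω] (μ : Measure Ω) [IsProbabilityMeasure μ]
    (n : ℕ) (X : Fin n → Ω → ℕ) (p : Fin n → ℝ)
    (hmeas : ∀ i, Measurable (X i))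
    (hind : iIndepFun X μ)
    (h01 : ∀ i ω, X i ω = 0 ∨ X i ω = 1)
    (hp : ∀ i, μ {ω | X i ω = 1} = ENNReal.ofReal (p i))
    (hpI : ∀ i, p i ∈ Set.Icc (0 : ℝ) (1 / 2)) :
    μ {ω | (∑ i, X i ω) = 1}
      = ENNReal.ofReal (∑ i, ∏ j, (if j = i then p j else 1 - p j)) := by
  set T : Fin n → Set Ω :=
    fun i => ⋂ j, X j ⁻¹' ({if j = i then 1 else 0} : Set ℕ) with hT
  have hmemT : ∀ i ω, ω ∈ T i ↔ ∀ j, X j ω = if j = i then 1 else 0 := by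
    intro i ω; simp [hT]
  -- set equality
  have hE : {ω | (∑ i, X i ω) = 1} = ⋃ i, T i := by
    ext ω
    simp only [Set.mem_setOf_eq, Set.mem_iUnion]
    constructor
    · intro h
      have hex : ∃ i, X i ω ≠ 0 := by
        by_contra hc
        push_neg at hc
        simp only [hc, Finset.sum_const_zero] at h
        exact one_ne_zero h.symm
      obtain ⟨i, hi⟩ := hex
      have hi1 : X i ω = 1 := (h01 i ω).resolve_left hi
      refine ⟨i, (hmemT i ω).2 fun j => ?_⟩
      by_cases hji : j = i
      · simp [hji, hi1]
      · rw [if_neg hji]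
        have hrest : ∑ k ∈ Finset.univ.erase i, X k ω = 0 := by
          rw [← Finset.sum_erase_add Finset.univ _ (Finset.mem_univ i), hi1] at h
          omega
        have := (Finset.sum_eq_zero_iff.mp hrest) j
          (Finset.mem_erase.mpr ⟨hji, Finset.mem_univ j⟩)
        exact this
    · rintro ⟨i, hi⟩
      have h' := (hmemT i ω).1 hi
      calc ∑ j, X j ω = ∑ j, if j = i then 1 else 0 := Finset.sum_congr rfl fun j _ => h' j
        _ = 1 := by simp
  -- single slot measures
  have hμ1 : ∀ j, μ (X j ⁻¹' ({1} : Set ℕ)) = ENNReal.ofReal (p j) := by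
    intro j
    rw [show X j ⁻¹' ({1} : Set ℕ) = {ω | X j ω = 1} from rfl, hp j]
  have hμ0 : ∀ j, μ (X j ⁻¹' ({0} : Set ℕ)) = ENNReal.ofReal (1 - p j) := by
    intro j
    have hc : X j ⁻¹' ({0} : Set ℕ) = (X j ⁻¹' ({1} : Set ℕ))ᶜ := by
      ext ω
      simp only [Set.mem_preimage, Set.mem_singleton_iff, Set.mem_compl_iff]
      rcases h01 j ω with h | h <;> simp [h]
    rw [hc, prob_compl_eq_one_sub (hmeas j (measurableSet_singleton 1)), hμ1 j,
      ENNReal.ofReal_sub _ (hpI j).1, ENNReal.ofReal_one]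
  -- measure of T i
  have hμT : ∀ i, μ (T i) = ENNReal.ofReal (∏ j, (if j = i then p j else 1 - p j)) := by
    intro i
    rw [hT]
    rw [hind.meas_iInter fun j => ⟨{if j = i then 1 else 0}, measurableSet_singleton _, rfl⟩]
    rw [ofReal_prod_aux _ _ (fun j _ => by
      by_cases hji : j = i
      · simp only [if_pos hji]; exact (hpI j).1
      · simp only [if_neg hji]; have := (hpI j).2; linarith)]
    refine Finset.prod_congr rfl fun j _ => ?_
    by_cases hji : j = i
    · simp only [if_pos hji]; exact hμ1 j
    · simp only [if_neg hji]; exact hμ0 j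
  -- disjointness and measurability
  have hTm : ∀ i, MeasurableSet (T i) :=
    fun i => MeasurableSet.iInter fun j => hmeas j (measurableSet_singleton _)
  have hdisj : Pairwise (Function.onFun Disjoint T) := by
    intro i k hik
    rw [Function.onFun, Set.disjoint_left]
    intro ω hωi hωk
    have h1 := (hmemT i ω).1 hωi i
    have h2 := (hmemT k ω).1 hωk i
    rw [if_pos rfl] at h1
    rw [if_neg hik] at h2
    omega
  rw [hE, measure_iUnion hdisj hTm, tsum_fintype]
  rw [ENNReal.ofReal_sum_of_nonneg fun i _ => Finset.prod_nonneg fun j _ => by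
    by_cases hji : j = i
    · simp only [if_pos hji]; exact (hpI j).1
    · simp only [if_neg hji]; have := (hpI j).2; linarith]
  exact Finset.sum_congr rfl fun i _ => hμT i

/-- For independent {0,1}-valued random variables `X i` with
`Pr[X i = 1] = p i ∈ [0, 1/2]` and `p = ∑ i, p i`, if `1/4 ≤ p ≤ 2`, then
`Pr[∑ i, X i = 1] ≥ 1/16`. -/
theorem constant_contention_success
    {Ω : Type*} [MeasurableSpace Ω] (μ : Measure Ω) [IsProbabilityMeasure μ]
    (n : ℕ) (hn : 1 ≤ n) (X : Fin n → Ω → ℕ) (p : Fin n → ℝ)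
    (hmeas : ∀ i, Measurable (X i))
    (hind : iIndepFun X μ)
    (h01 : ∀ i ω, X i ω = 0 ∨ X i ω = 1)
    (hp : ∀ i, μ {ω | X i ω = 1} = ENNReal.ofReal (p i))
    (hpI : ∀ i, p i ∈ Set.Icc (0 : ℝ) (1 / 2))
    (hlo : 1 / 4 ≤ ∑ i, p i) (hhi : ∑ i, p i ≤ 2) :
    ENNReal.ofReal (1 / 16 : ℝ) ≤ μ {ω | (∑ i, X i ω) = 1} := by
  rw [main_meas μ n X p hmeas hind h01 hp hpI]
  exact ENNReal.ofReal_le_ofReal (real_key n p hpI hlo hhi)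
end

section
/- Let n ≥ 1 and let X_1, …, X_n be independent {0,1}-valued random variables on a probability space with Pr[X_i = 1] = p_i, where p_i ∈ [0, 1/2] for every i ∈ {1,…,n}. Let p = ∑_{i=1}^n p_i. If p ≤ 1, then Pr[∑_{i=1}^n X_i = 1] ≥ p/4. -/
open MeasureTheory ProbabilityTheory

lemma my_ofReal_prod {ι : Type*} (s : Finset ι) (f : ι → ℝ) (h : ∀ i ∈ s, 0 ≤ f i) :
    ENNReal.ofReal (∏ i ∈ s, f i) = ∏ i ∈ s, ENNReal.ofReal (f i) := by
  induction s using Finset.cons_induction with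
  | empty => simp
  | cons a s ha ih =>
    rw [Finset.prod_cons, Finset.prod_cons,
      ENNReal.ofReal_mul (h a (Finset.mem_cons_self a s)),
      ih (fun i hi' => h i (Finset.mem_cons_of_mem hi'))]

lemma my_exp_bound (x : ℝ) (hx0 : 0 ≤ x) (hx : x ≤ 1 / 2) :
    Real.exp (-(x * Real.log 4)) ≤ 1 - x := by
  have h := convexOn_exp.2 (Set.mem_univ (0 : ℝ)) (Set.mem_univ (-Real.log 2))
    (by linarith : (0 : ℝ) ≤ 1 - 2 * x) (by linarith : (0 : ℝ) ≤ 2 * x) (by ring)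
  have hlog : Real.log 4 = 2 * Real.log 2 := by
    rw [show (4 : ℝ) = 2 ^ 2 by norm_num, Real.log_pow]; push_cast; ring
  have he : Real.exp (-Real.log 2) = 1 / 2 := by
    rw [Real.exp_neg, Real.exp_log (by norm_num)]; norm_num
  simp only [smul_eq_mul, mul_zero, zero_add, Real.exp_zero, mul_one, he] at h
  calc Real.exp (-(x * Real.log 4)) = Real.exp (2 * x * -Real.log 2) := by
        rw [hlog]; ring_nf
    _ ≤ (1 - 2 * x) + 2 * x * (1 / 2) := h
    _ = 1 - x := by ring

/-- For independent {0,1}-valued random variables `X i` with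
`Pr[X i = 1] = p i ∈ [0, 1/2]` and `p = ∑ i, p i`, if `p ≤ 1`, then
`Pr[∑ i, X i = 1] ≥ p / 4`. -/
theorem small_contention_success
    {Ω : Type*} [MeasurableSpace Ω] (μ : Measure Ω) [IsProbabilityMeasure μ]
    (n : ℕ) (hn : 1 ≤ n) (X : Fin n → Ω → ℕ) (p : Fin n → ℝ)
    (hmeas : ∀ i, Measurable (X i))
    (hind : iIndepFun X μ)
    (h01 : ∀ i ω, X i ω = 0 ∨ X i ω = 1)
    (hp : ∀ i, μ {ω | X i ω = 1} = ENNReal.ofReal (p i))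
    (hpI : ∀ i, p i ∈ Set.Icc (0 : ℝ) (1 / 2))
    (hle : ∑ i, p i ≤ 1) :
    ENNReal.ofReal ((∑ i, p i) / 4) ≤ μ {ω | (∑ i, X i ω) = 1} := by
  classical
  -- values
  set q : Fin n → Fin n → ℝ := fun i j => if j = i then p i else 1 - p j with hq
  set S : Fin n → Fin n → Set Ω :=
    fun i j => X j ⁻¹' {if j = i then 1 else 0} with hS
  set A : Fin n → Set Ω := fun i => ⋂ j, S i j with hA
  have hq_nonneg : ∀ i j, 0 ≤ q i j := by
    intro i j
    simp only [hq]
    split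
    · exact (hpI i).1
    · have := (hpI j).2; linarith
  -- measure of each S i j
  have hzero : ∀ j, μ (X j ⁻¹' {0}) = ENNReal.ofReal (1 - p j) := by
    intro j
    have hc : X j ⁻¹' {0} = (X j ⁻¹' {1})ᶜ := by
      ext ω
      simp only [Set.mem_preimage, Set.mem_singleton_iff, Set.mem_compl_iff]
      rcases h01 j ω with h | h <;> simp [h]
    have h1 : μ (X j ⁻¹' {1}) = ENNReal.ofReal (p j) := hp j
    rw [hc, measure_compl ((hmeas j) (measurableSet_singleton _)) (measure_ne_top μ _), h1,
      measure_univ, ← ENNReal.ofReal_one,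
      ← ENNReal.ofReal_sub _ (hpI j).1]
  have hmeasS : ∀ i, μ (A i) = ENNReal.ofReal (∏ j, q i j) := by
    intro i
    have := hind.meas_iInter (s := S i) (fun j => ⟨{if j = i then 1 else 0},
      measurableSet_singleton _, rfl⟩)
    rw [hA]
    rw [this, my_ofReal_prod _ _ (fun j _ => hq_nonneg i j)]
    apply Finset.prod_congr rfl
    intro j _
    by_cases h : j = i
    · simp only [hS, hq, h, if_pos rfl]
      exact hp i
    · simp only [hS, hq, if_neg h]
      exact hzero j
  -- disjointness
  have hdisj : Pairwise (Function.onFun Disjoint A) := by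
    intro i k hik
    rw [Function.onFun, Set.disjoint_left]
    intro ω hωi hωk
    have h1 : X i ω = 1 := by
      have := Set.mem_iInter.1 hωi i
      simpa [hS] using this
    have h2 : X i ω = 0 := by
      have := Set.mem_iInter.1 hωk i
      simpa [hS, hik] using this
    omega
  have hAmeas : ∀ i, MeasurableSet (A i) :=
    fun i => MeasurableSet.iInter fun j => (hmeas j) (measurableSet_singleton _)
  -- union is contained in the event
  have hsub : (⋃ i, A i) ⊆ {ω | (∑ i, X i ω) = 1} := by
    intro ω hω
    obtain ⟨i, hi⟩ := Set.mem_iUnion.1 hω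
    have hall : ∀ j, X j ω = if j = i then 1 else 0 := by
      intro j
      have := Set.mem_iInter.1 hi j
      simpa [hS] using this
    have : (∑ j, X j ω) = ∑ j, if j = i then 1 else 0 := by
      exact Finset.sum_congr rfl fun j _ => hall j
    simp only [Set.mem_setOf_eq, this, Finset.sum_ite_eq', Finset.mem_univ, if_pos]
  -- real inequality: ∏ j, q i j ≥ p i / 4
  have hreal : ∀ i, p i / 4 ≤ ∏ j, q i j := by
    intro i
    have h1 : ∏ j, q i j = p i * ∏ j ∈ Finset.univ.erase i, (1 - p j) := by
      rw [← Finset.prod_erase_mul _ _ (Finset.mem_univ i)]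
      rw [mul_comm]
      congr 1
      · simp [hq]
      · exact Finset.prod_congr rfl fun j hj => by simp [hq, (Finset.mem_erase.1 hj).1]
    have h2 : (1 : ℝ) / 4 ≤ ∏ j ∈ Finset.univ.erase i, (1 - p j) := by
      have hstep : ∀ j : Fin n, Real.exp (-(p j * Real.log 4)) ≤ 1 - p j :=
        fun j => my_exp_bound (p j) (hpI j).1 (hpI j).2
      have hfull : ∏ j, Real.exp (-(p j * Real.log 4)) ≤ ∏ j ∈ Finset.univ.erase i, (1 - p j) := by
        calc ∏ j, Real.exp (-(p j * Real.log 4))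
            ≤ ∏ j, (if j ∈ Finset.univ.erase i then (1 - p j) else 1) := by
              apply Finset.prod_le_prod
              · intro j _; positivity
              · intro j _
                by_cases h : j ∈ Finset.univ.erase i
                · simpa [h] using hstep j
                · simp only [h, if_false]
                  calc Real.exp (-(p j * Real.log 4)) ≤ Real.exp 0 := by
                        apply Real.exp_le_exp.2
                        have h4 : 0 ≤ Real.log 4 := Real.log_nonneg (by norm_num)
                        have := (hpI j).1
                        nlinarith
                    _ = 1 := Real.exp_zero
          _ = ∏ j ∈ Finset.univ.erase i, (1 - p j) := by
              rw [Finset.prod_ite_mem, Finset.univ_inter]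
      have hprodexp : ∏ j, Real.exp (-(p j * Real.log 4)) =
          Real.exp (-((∑ j, p j) * Real.log 4)) := by
        rw [← Real.exp_sum]
        congr 1
        simp [Finset.sum_mul, Finset.sum_neg_distrib]
      have hge : Real.exp (-Real.log 4) ≤ Real.exp (-((∑ j, p j) * Real.log 4)) := by
        apply Real.exp_le_exp.2
        have h4 : 0 ≤ Real.log 4 := Real.log_nonneg (by norm_num)
        nlinarith
      have h14 : Real.exp (-Real.log 4) = 1 / 4 := by
        rw [Real.exp_neg, Real.exp_log (by norm_num)]; norm_num
      calc (1 : ℝ) / 4 = Real.exp (-Real.log 4) := h14.symm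
        _ ≤ Real.exp (-((∑ j, p j) * Real.log 4)) := hge
        _ = ∏ j, Real.exp (-(p j * Real.log 4)) := hprodexp.symm
        _ ≤ _ := hfull
    calc p i / 4 = p i * (1 / 4) := by ring
      _ ≤ p i * ∏ j ∈ Finset.univ.erase i, (1 - p j) :=
          mul_le_mul_of_nonneg_left h2 (hpI i).1
      _ = ∏ j, q i j := h1.symm
  -- put it together
  calc ENNReal.ofReal ((∑ i, p i) / 4)
      = ENNReal.ofReal (∑ i, p i / 4) := by rw [← Finset.sum_div]
    _ ≤ ENNReal.ofReal (∑ i, ∏ j, q i j) := by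
        apply ENNReal.ofReal_le_ofReal
        exact Finset.sum_le_sum fun i _ => hreal i
    _ = ∑ i, ENNReal.ofReal (∏ j, q i j) :=
        ENNReal.ofReal_sum_of_nonneg fun i _ =>
          Finset.prod_nonneg fun j _ => hq_nonneg i j
    _ = ∑ i, μ (A i) := by
        exact Finset.sum_congr rfl fun i _ => (hmeasS i).symm
    _ = μ (⋃ i, A i) := by rw [measure_iUnion hdisj hAmeas, tsum_fintype]
    _ ≤ μ {ω | (∑ i, X i ω) = 1} := measure_mono hsub
end

section
/- Let K be a random variable on a probability space taking values in the natural numbers, let a > 1 and t ≥ 2 be real numbers, and set L = log_a(t/2). If ∑_{k ∈ ℕ, k ≤ L} Pr[K = k] · a^{−k} ≤ 1/t, then the expectation satisfies E[K] ≥ L/2. -/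
open MeasureTheory ProbabilityTheory

/-- for an ℕ-valued random variable `K`, reals `a > 1` and `t ≥ 2`, and
`L = log_a (t/2)`, if `∑_{k ≤ L} Pr[K = k] * a⁻ᵏ ≤ 1/t` then `E[K] ≥ L / 2`.
(The sum over naturals `k` with `(k : ℝ) ≤ L` is the sum over `k ≤ ⌊L⌋₊`, since `L ≥ 0`.) -/
theorem expected_broadcasts_lower_bound
    {Ω : Type*} [MeasurableSpace Ω] (μ : Measure Ω) [IsProbabilityMeasure μ]
    (K : Ω → ℕ) (hK : Measurable K)
    (a t : ℝ) (ha : 1 < a) (ht : 2 ≤ t)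
    (L : ℝ) (hL : L = Real.logb a (t / 2))
    (hsum : ∑ k ∈ Finset.range (Nat.floor L + 1),
        (μ {ω | K ω = k}).toReal * a ^ (-(k : ℝ)) ≤ 1 / t) :
    ENNReal.ofReal (L / 2) ≤ ∫⁻ ω, (K ω : ENNReal) ∂μ := by
  have ha0 : (0:ℝ) < a := by linarith
  have ht0 : (0:ℝ) < t := by linarith
  have ht2 : (0:ℝ) < t / 2 := by linarith
  have hL0 : 0 ≤ L := by
    rw [hL]
    exact Real.logb_nonneg ha (by linarith)
  set n := Nat.floor L with hn
  have hLn : L < n + 1 := Nat.lt_floor_add_one L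
  -- a ^ (-L) = 2 / t
  have haL : a ^ (-L) = 2 / t := by
    rw [hL, Real.rpow_neg ha0.le, Real.rpow_logb ha0 (ne_of_gt ha) ht2]
    rw [inv_div]
  -- each term bound
  have hterm : ∀ k ∈ Finset.range (n + 1),
      (μ {ω | K ω = k}).toReal * (2 / t) ≤ (μ {ω | K ω = k}).toReal * a ^ (-(k : ℝ)) := by
    intro k hk
    apply mul_le_mul_of_nonneg_left _ ENNReal.toReal_nonneg
    rw [← haL]
    apply Real.rpow_le_rpow_of_exponent_le ha.le
    have : (k : ℝ) ≤ L := by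
      have hkn : k ≤ n := Nat.lt_succ_iff.mp (Finset.mem_range.mp hk)
      calc (k:ℝ) ≤ n := by exact_mod_cast hkn
        _ ≤ L := Nat.floor_le hL0
    linarith
  have hsum2 : ∑ k ∈ Finset.range (n + 1), (μ {ω | K ω = k}).toReal ≤ 1 / 2 := by
    have h1 : (∑ k ∈ Finset.range (n + 1), (μ {ω | K ω = k}).toReal) * (2 / t)
        ≤ 1 / t := by
      rw [Finset.sum_mul]
      exact le_trans (Finset.sum_le_sum hterm) hsum
    rw [← mul_div_assoc, div_le_div_iff_of_pos_right ht0] at h1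
    linarith
  -- measure of {K ≤ n} is at most 1/2
  have hmeas : ∀ k, MeasurableSet {ω | K ω = k} := fun k => hK (measurableSet_singleton k)
  have hA : μ {ω | K ω ≤ n} = ∑ k ∈ Finset.range (n + 1), μ {ω | K ω = k} := by
    have : {ω | K ω ≤ n} = ⋃ k ∈ Finset.range (n + 1), {ω | K ω = k} := by
      ext ω
      simp [Nat.lt_succ_iff]
    rw [this, measure_biUnion_finset _ (fun k _ => hmeas k)]
    intro i _ j _ hij
    simp only [Set.disjoint_left]
    rintro ω (h1 : K ω = i) (h2 : K ω = j)
    exact hij (h1 ▸ h2 ▸ rfl)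
  have hAle : μ {ω | K ω ≤ n} ≤ ENNReal.ofReal (1/2) := by
    rw [hA]
    have hfin : ∀ k ∈ Finset.range (n+1), μ {ω | K ω = k} ≠ ⊤ :=
      fun k _ => measure_ne_top μ _
    calc ∑ k ∈ Finset.range (n + 1), μ {ω | K ω = k}
        = ENNReal.ofReal (∑ k ∈ Finset.range (n + 1), (μ {ω | K ω = k}).toReal) := by
          rw [ENNReal.ofReal_sum_of_nonneg (fun k _ => ENNReal.toReal_nonneg)]
          exact Finset.sum_congr rfl fun k hk => (ENNReal.ofReal_toReal (hfin k hk)).symm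
      _ ≤ ENNReal.ofReal (1/2) := ENNReal.ofReal_le_ofReal hsum2
  -- complement has measure ≥ 1/2
  have hcompl : ENNReal.ofReal (1/2) ≤ μ {ω | n + 1 ≤ K ω} := by
    have hc : {ω | n + 1 ≤ K ω} = {ω | K ω ≤ n}ᶜ := by
      ext ω; simp only [Set.mem_setOf_eq, Set.mem_compl_iff, not_le]; constructor <;> intro h <;> omega
    rw [hc, measure_compl (by
      have : {ω | K ω ≤ n} = ⋃ k ∈ Finset.range (n + 1), {ω | K ω = k} := by
        ext ω; simp [Nat.lt_succ_iff]
      rw [this]; exact Finset.measurableSet_biUnion _ (fun k _ => hmeas k)) (measure_ne_top μ _),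
      measure_univ]
    have h12 : ENNReal.ofReal (1/2) = (2:ENNReal)⁻¹ := by
      rw [show (1:ℝ)/2 = (2:ℝ)⁻¹ by norm_num, ENNReal.ofReal_inv_of_pos (by norm_num : (0:ℝ) < 2)]
      simp
    rw [h12] at hAle ⊢
    refine ENNReal.le_sub_of_add_le_left (by norm_num) ?_
    calc μ {ω | K ω ≤ n} + (2:ENNReal)⁻¹ ≤ 2⁻¹ + 2⁻¹ := add_le_add hAle le_rfl
      _ = 1 := ENNReal.inv_two_add_inv_two
  -- Markov
  have hmarkov : ((n + 1 : ℕ) : ENNReal) * μ {ω | n + 1 ≤ K ω} ≤ ∫⁻ ω, (K ω : ENNReal) ∂μ := by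
    have := mul_meas_ge_le_lintegral₀ (μ := μ)
      (f := fun ω => (K ω : ENNReal)) ((measurable_from_top.comp hK : Measurable fun ω => ((K ω : ℕ) : ENNReal)).aemeasurable) ((n + 1 : ℕ) : ENNReal)
    have hset : {ω | n + 1 ≤ K ω} = {ω | ((n + 1 : ℕ) : ENNReal) ≤ (K ω : ENNReal)} := by
      ext ω
      constructor
      · intro h; simp only [Set.mem_setOf_eq]; exact_mod_cast h
      · intro h; simp only [Set.mem_setOf_eq] at h ⊢; exact_mod_cast h
    rw [hset]
    exact this
  refine le_trans ?_ hmarkov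
  calc ENNReal.ofReal (L / 2)
      ≤ ENNReal.ofReal ((n + 1 : ℕ) * (1/2)) := by
        apply ENNReal.ofReal_le_ofReal
        push_cast
        linarith
    _ = ((n + 1 : ℕ) : ENNReal) * ENNReal.ofReal (1/2) := by
        rw [ENNReal.ofReal_mul (by positivity), ENNReal.ofReal_natCast]
    _ ≤ ((n + 1 : ℕ) : ENNReal) * μ {ω | n + 1 ≤ K ω} := by
        exact mul_le_mul_right hcompl _
end

section
/- Let n ≥ 1 be a natural number and let a_1, …, a_n ∈ ℕ be arrival slots. For each slot s ∈ ℕ define the contention c(s) = ∑_{i : a_i ≤ s} 1/(s − a_i + 1). Then the number of slots s ∈ ℕ with c(s) ≥ 1 is at most 2n·(ln(2n) + 1), where ln denotes the natural logarithm. -/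
open Finset

/-- `n` nodes arrive at slots `a 1, …, a n` and each runs Backoff(1/x),
so that the contention of slot `s` is `c s = ∑_{i : a i ≤ s} 1 / (s - a i + 1)`. Then
the set of slots with contention at least `1` is finite and has at most
`2n * (ln (2n) + 1)` elements. -/
theorem high_contention_slots_bound
    (n : ℕ) (hn : 1 ≤ n) (a : Fin n → ℕ)
    (c : ℕ → ℝ)
    (hc : ∀ s : ℕ, c s = ∑ i ∈ Finset.univ.filter (fun i => a i ≤ s),
        (1 : ℝ) / ((s - a i : ℕ) + 1)) :
    {s : ℕ | 1 ≤ c s}.Finite ∧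
      ({s : ℕ | 1 ≤ c s}.ncard : ℝ) ≤ 2 * n * (Real.log (2 * n) + 1) := by
  set M := Finset.univ.sup a with hM
  set N := M + 2 * n with hN
  -- an "old" term (arrival at least 2n slots ago) contributes at most 1/(2n+1)
  have hold : ∀ s : ℕ, ∀ i : Fin n, a i + 2 * n ≤ s →
      (1 : ℝ) / ((s - a i : ℕ) + 1) ≤ 1 / (2 * n + 1) := by
    intro s i h
    apply one_div_le_one_div_of_le (by positivity)
    have h2 : 2 * n ≤ s - a i := by omega
    have : (2 * n : ℝ) ≤ ((s - a i : ℕ) : ℝ) := by exact_mod_cast h2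
    linarith
  -- the sum of old terms is at most 1/2
  have holdsum : ∀ s : ℕ, ∀ A : Finset (Fin n), (∀ i ∈ A, a i + 2 * n ≤ s) →
      ∑ i ∈ A, (1 : ℝ) / ((s - a i : ℕ) + 1) ≤ 1 / 2 := by
    intro s A hA
    calc ∑ i ∈ A, (1 : ℝ) / ((s - a i : ℕ) + 1)
        ≤ ∑ _i ∈ A, (1 : ℝ) / (2 * n + 1) :=
          Finset.sum_le_sum fun i hi => hold s i (hA i hi)
      _ = A.card * (1 / (2 * n + 1)) := by rw [Finset.sum_const, nsmul_eq_mul]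
      _ ≤ n * (1 / (2 * n + 1)) := by
          apply mul_le_mul_of_nonneg_right _ (by positivity)
          exact_mod_cast (A.card_le_univ.trans_eq (by simp))
      _ ≤ 1 / 2 := by
          rw [mul_one_div, div_le_div_iff₀ (by positivity) (by norm_num)]
          have : (1 : ℝ) ≤ n := by exact_mod_cast hn
          linarith
  -- the set of high contention slots is contained in range N
  have hsub : {s : ℕ | 1 ≤ c s} ⊆ ↑(Finset.range N) := by
    intro s hs
    simp only [Finset.coe_range, Set.mem_Iio]
    by_contra h
    push_neg at h
    have hcs : c s ≤ 1 / 2 := by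
      rw [hc]
      apply holdsum
      intro i _
      have : a i ≤ M := Finset.le_sup (Finset.mem_univ i)
      omega
    have : (1 : ℝ) ≤ c s := hs
    linarith
  have hfin : {s : ℕ | 1 ≤ c s}.Finite :=
    Set.Finite.subset (Finset.range N).finite_toSet hsub
  refine ⟨hfin, ?_⟩
  -- work with the finset T of high contention slots
  set T := (Finset.range N).filter (fun s => 1 ≤ c s) with hT
  have hTset : {s : ℕ | 1 ≤ c s} = ↑T := by
    ext s
    simp only [hT, Finset.coe_filter, Set.mem_setOf_eq, Finset.mem_range]
    exact ⟨fun h => ⟨by simpa using hsub h, h⟩, fun h => h.2⟩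
  rw [hTset, Set.ncard_coe_finset]
  -- recent contention
  set r : ℕ → ℝ := fun s => ∑ i ∈ Finset.univ.filter
      (fun i => a i ≤ s ∧ s < a i + 2 * n), (1 : ℝ) / ((s - a i : ℕ) + 1) with hr
  have hrnonneg : ∀ s, 0 ≤ r s := fun s =>
    Finset.sum_nonneg fun i _ => by positivity
  -- on T, recent contention is at least 1/2
  have hrhalf : ∀ s ∈ T, (1 : ℝ) / 2 ≤ r s := by
    intro s hs
    have hs1 : (1 : ℝ) ≤ c s := (Finset.mem_filter.mp hs).2
    have hsplit : r s + ∑ i ∈ Finset.univ.filter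
        (fun i => a i ≤ s ∧ ¬ s < a i + 2 * n), (1 : ℝ) / ((s - a i : ℕ) + 1) = c s := by
      have hrs : r s = ∑ i ∈ Finset.univ.filter
          (fun i => a i ≤ s ∧ s < a i + 2 * n), (1 : ℝ) / ((s - a i : ℕ) + 1) := rfl
      rw [hrs, hc]
      rw [show Finset.univ.filter (fun i => a i ≤ s ∧ s < a i + 2 * n)
          = (Finset.univ.filter (fun i => a i ≤ s)).filter (fun i => s < a i + 2 * n) by
        rw [Finset.filter_filter]]
      rw [show Finset.univ.filter (fun i => a i ≤ s ∧ ¬ s < a i + 2 * n)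
          = (Finset.univ.filter (fun i => a i ≤ s)).filter (fun i => ¬ s < a i + 2 * n) by
        rw [Finset.filter_filter]]
      exact Finset.sum_filter_add_sum_filter_not _ _ _
    have hold2 : ∑ i ∈ Finset.univ.filter
        (fun i => a i ≤ s ∧ ¬ s < a i + 2 * n), (1 : ℝ) / ((s - a i : ℕ) + 1) ≤ 1 / 2 := by
      apply holdsum
      intro i hi
      have := (Finset.mem_filter.mp hi).2
      omega
    linarith
  -- total recent contention over range N is at most n * (1 + log (2n))
  have hkey : ∑ s ∈ Finset.range N, r s ≤ n * (1 + Real.log (2 * n)) := by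
    have hswap : ∑ s ∈ Finset.range N, r s
        = ∑ i : Fin n, ∑ s ∈ Finset.range N,
            (if a i ≤ s ∧ s < a i + 2 * n then (1 : ℝ) / ((s - a i : ℕ) + 1) else 0) := by
      rw [Finset.sum_comm]
      exact Finset.sum_congr rfl fun s _ => Finset.sum_filter _ _
    rw [hswap]
    have hterm : ∀ i : Fin n, ∑ s ∈ Finset.range N,
        (if a i ≤ s ∧ s < a i + 2 * n then (1 : ℝ) / ((s - a i : ℕ) + 1) else 0)
        = ((harmonic (2 * n) : ℚ) : ℝ) := by
      intro i
      rw [← Finset.sum_filter]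
      have hIco : (Finset.range N).filter (fun s => a i ≤ s ∧ s < a i + 2 * n)
          = Finset.Ico (a i) (a i + 2 * n) := by
        ext s
        simp only [Finset.mem_filter, Finset.mem_range, Finset.mem_Ico]
        have : a i ≤ M := Finset.le_sup (Finset.mem_univ i)
        omega
      rw [hIco, Finset.sum_Ico_eq_sum_range]
      simp only [Nat.add_sub_cancel_left, Nat.add_sub_cancel]
      rw [harmonic]
      push_cast
      simp [one_div]
    calc ∑ i : Fin n, ∑ s ∈ Finset.range N,
          (if a i ≤ s ∧ s < a i + 2 * n then (1 : ℝ) / ((s - a i : ℕ) + 1) else 0)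
        = ∑ _i : Fin n, ((harmonic (2 * n) : ℚ) : ℝ) :=
          Finset.sum_congr rfl fun i _ => hterm i
      _ = n * ((harmonic (2 * n) : ℚ) : ℝ) := by
          rw [Finset.sum_const, nsmul_eq_mul, Finset.card_univ, Fintype.card_fin]
      _ ≤ n * (1 + Real.log (2 * n)) := by
          apply mul_le_mul_of_nonneg_left _ (by positivity)
          have := harmonic_le_one_add_log (2 * n)
          push_cast at this ⊢
          linarith
  -- combine
  have hTcard : (T.card : ℝ) * (1 / 2) ≤ ∑ s ∈ Finset.range N, r s := by
    calc (T.card : ℝ) * (1 / 2) = ∑ _s ∈ T, (1 : ℝ) / 2 := by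
          rw [Finset.sum_const, nsmul_eq_mul]
      _ ≤ ∑ s ∈ T, r s := Finset.sum_le_sum hrhalf
      _ ≤ ∑ s ∈ Finset.range N, r s :=
          Finset.sum_le_sum_of_subset_of_nonneg (Finset.filter_subset _ _)
            (fun s _ _ => hrnonneg s)
  have : (T.card : ℝ) * (1 / 2) ≤ n * (1 + Real.log (2 * n)) := hTcard.trans hkey
  nlinarith [this]
end
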